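/- Let b ∈ ℂ^r satisfy the weak hyperbolicity condition of type (r₁,r₂), and let f(z) = Σ_{|m|>0} a_m z^m be a power series convergent on all of ℂ^r with zero constant term. Then φ(z) = Σ_{|m|>0} (a_m/(b·m)) z^m is also convergent on all of ℂ^r, and is the unique formal power series solution with zero constant term of the equation Σ_j b_j z_j ∂φ/∂z_j = f. -/

import Mathlib

/-- Let b ∈ ℂ^r satisfy weak hyperbolicity of type (r₁,r₂) and let
f(z) = Σ_{|m|>0} a_m z^m be a power series (given by its coefficients a, with zero
constant term) converging on all of ℂ^r. Then φ(z) = Σ (a_m/(b·m)) z^m also converges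
on all of ℂ^r, and its coefficient family is the unique formal solution with zero
constant term of Σ_j b_j z_j ∂φ/∂z_j = f (an equation which, on coefficients, reads
(b·m)·φ_m = a_m for all m). -/
theorem poincare_solution_of_euler_equation (r₁ r₂ r : ℕ) (hr : r = r₁ + r₂)
    (hr₁ : 1 ≤ r₁) (hr₂ : 1 ≤ r₂)
    (b : Fin r → ℂ) (hne : ∀ j, b j ≠ 0)
    (hwh : ∀ i j : Fin r, (i : ℕ) < r₁ → r₁ ≤ (j : ℕ) →
      0 ≤ (b i).arg ∧ (b i).arg < (b j).arg ∧ (b j).arg < Real.pi)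
    (a : (Fin r → ℕ) → ℂ) (ha0 : a 0 = 0)
    (hconv : ∀ z : Fin r → ℂ, Summable (fun m : Fin r → ℕ => a m * ∏ j, z j ^ m j)) :
    (∀ z : Fin r → ℂ,
      Summable (fun m : Fin r → ℕ =>
        (a m / ∑ j, (m j : ℂ) * b j) * ∏ j, z j ^ m j)) ∧
    (∀ m : Fin r → ℕ,
      (∑ j, (m j : ℂ) * b j) * (a m / ∑ j, (m j : ℂ) * b j) = a m) ∧
    (∀ ψ : (Fin r → ℕ) → ℂ, ψ 0 = 0 →
      (∀ m : Fin r → ℕ, (∑ j, (m j : ℂ) * b j) * ψ m = a m) →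
      ψ = fun m => a m / ∑ j, (m j : ℂ) * b j) := by
  haveI : Nonempty (Fin r) := ⟨⟨0, by omega⟩⟩
  -- every b j has argument in [0, π)
  have harg : ∀ j : Fin r, 0 ≤ (b j).arg ∧ (b j).arg < Real.pi := by
    intro j
    set i0 : Fin r := ⟨0, by omega⟩
    set j0 : Fin r := ⟨r₁, by omega⟩
    by_cases h : (j : ℕ) < r₁
    · obtain ⟨h1, h2, h3⟩ := hwh j j0 h (le_refl _)
      exact ⟨h1, lt_trans h2 h3⟩
    · obtain ⟨h1, h2, h3⟩ := hwh i0 j (by simp [i0]; omega) (le_of_not_gt h)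
      exact ⟨le_of_lt (lt_of_le_of_lt h1 h2), h3⟩
  -- structural facts about im and re
  have him : ∀ j : Fin r, 0 ≤ (b j).im := fun j =>
    Complex.arg_nonneg_iff.mp (harg j).1
  have hre : ∀ j : Fin r, (b j).im = 0 → 0 < (b j).re := by
    intro j h0
    rcases lt_trichotomy (b j).re 0 with hlt | heq | hgt
    · exact absurd (Complex.arg_eq_pi_iff.mpr ⟨hlt, h0⟩) (ne_of_lt (harg j).2)
    · exact absurd (Complex.ext heq h0) (hne j)
    · exact hgt
  -- the positive gauge
  set g : Fin r → ℝ := fun j => if (b j).im = 0 then (b j).re else (b j).im with hg_def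
  have hgpos : ∀ j, 0 < g j := by
    intro j
    by_cases h : (b j).im = 0
    · simpa [hg_def, h] using hre j h
    · simpa [hg_def, h] using lt_of_le_of_ne (him j) (Ne.symm h)
  set c : ℝ := Finset.univ.inf' Finset.univ_nonempty g with hc_def
  have hcpos : 0 < c := by
    obtain ⟨j, -, hj⟩ := Finset.exists_mem_eq_inf' (Finset.univ_nonempty) g
    rw [hc_def, hj]; exact hgpos j
  have hcle : ∀ j, c ≤ g j := fun j => Finset.inf'_le g (Finset.mem_univ j)
  -- key lower bound
  have hkey : ∀ m : Fin r → ℕ, m ≠ 0 → c ≤ ‖∑ j, (m j : ℂ) * b j‖ := by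
    intro m hm
    set S : ℂ := ∑ j, (m j : ℂ) * b j with hS_def
    have hSim : S.im = ∑ j, (m j : ℝ) * (b j).im := by
      simp [hS_def, Complex.im_sum]
    have hSre : S.re = ∑ j, (m j : ℝ) * (b j).re := by
      simp [hS_def, Complex.re_sum]
    obtain ⟨j, hj⟩ : ∃ j, m j ≠ 0 := by
      by_contra h
      push_neg at h
      exact hm (funext fun j => h j)
    have hmj1 : (1 : ℝ) ≤ (m j : ℝ) := by exact_mod_cast Nat.one_le_iff_ne_zero.mpr hj
    by_cases hcase : ∃ j', m j' ≠ 0 ∧ (b j').im ≠ 0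
    · obtain ⟨j', hj'm, hj'i⟩ := hcase
      have hterm : c ≤ (m j' : ℝ) * (b j').im := by
        have h1 : c ≤ (b j').im := by
          have := hcle j'
          simpa [hg_def, hj'i] using this
        have h2 : (1 : ℝ) ≤ (m j' : ℝ) := by
          exact_mod_cast Nat.one_le_iff_ne_zero.mpr hj'm
        calc c ≤ (b j').im := h1
          _ = 1 * (b j').im := (one_mul _).symm
          _ ≤ (m j' : ℝ) * (b j').im := by
              exact mul_le_mul_of_nonneg_right h2 (him j')
      have hsum : (m j' : ℝ) * (b j').im ≤ S.im := by
        rw [hSim]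
        exact Finset.single_le_sum (f := fun i => (m i : ℝ) * (b i).im)
          (fun i _ => mul_nonneg (Nat.cast_nonneg _) (him i)) (Finset.mem_univ j')
      calc c ≤ S.im := le_trans hterm hsum
        _ ≤ |S.im| := le_abs_self _
        _ ≤ ‖S‖ := Complex.abs_im_le_norm S
    · push_neg at hcase
      -- all indices with m j' ≠ 0 have im (b j') = 0, hence re (b j') > 0
      have hj_im : (b j).im = 0 := hcase j hj
      have hterm : c ≤ (m j : ℝ) * (b j).re := by
        have h1 : c ≤ (b j).re := by
          have := hcle j
          simpa [hg_def, hj_im] using this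
        calc c ≤ (b j).re := h1
          _ = 1 * (b j).re := (one_mul _).symm
          _ ≤ (m j : ℝ) * (b j).re := by
              exact mul_le_mul_of_nonneg_right hmj1 (le_of_lt (hre j hj_im))
      have hsum : (m j : ℝ) * (b j).re ≤ S.re := by
        rw [hSre]
        refine Finset.single_le_sum (f := fun i => (m i : ℝ) * (b i).re)
          (fun i _ => ?_) (Finset.mem_univ j)
        by_cases hmi : m i = 0
        · simp [hmi]
        · exact mul_nonneg (Nat.cast_nonneg _) (le_of_lt (hre i (hcase i hmi)))
      calc c ≤ S.re := le_trans hterm hsum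
        _ ≤ |S.re| := le_abs_self _
        _ ≤ ‖S‖ := Complex.abs_re_le_norm S
  have hSne : ∀ m : Fin r → ℕ, m ≠ 0 → (∑ j, (m j : ℂ) * b j) ≠ 0 := by
    intro m hm h0
    have := hkey m hm
    rw [h0] at this
    simp at this
    exact absurd this (not_le.mpr hcpos)
  refine ⟨?_, ?_, ?_⟩
  · -- summability
    intro z
    refine Summable.of_norm_bounded
      ((hconv z).norm.div_const c) ?_
    intro m
    by_cases hm : m = 0
    · subst hm
      simp only [ha0]
      simp [div_nonneg, norm_nonneg, le_of_lt hcpos]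
    · simp only [norm_mul, norm_div]
      rw [div_mul_eq_mul_div]
      apply div_le_div_of_nonneg_left
      · positivity
      · exact hcpos
      · exact hkey m hm
  · -- equation
    intro m
    by_cases hm : m = 0
    · subst hm
      simp [ha0]
    · exact mul_div_cancel₀ (a m) (hSne m hm)
  · -- uniqueness
    intro ψ hψ0 hψ
    funext m
    by_cases hm : m = 0
    · subst hm
      rw [hψ0, ha0]
      simp
    · have := hψ m
      field_simp [hSne m hm]
      linear_combination this
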